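/- The isomorphism S : G/(id−γ_*)(G) → G_0 maps the image of G^{++} onto G_F^+ = {f ∈ G_0 : f > 0 on F} ∪ {0}. -/

import Mathlib

open scoped BigOperators

noncomputable section

/-- The open interval `(0,1)` on which the functions of `G₀ = ℤ[t,t⁻¹,(1-t)⁻¹]` live. -/
def I01 : Set ℝ := Set.Ioo 0 1

/-- Membership in `G₀ = ℤ[t,t⁻¹,(1-t)⁻¹]`, viewed as continuous functions on `(0,1)`:
`f ∈ G₀` iff `f(t) = p(t)/(tᵐ(1-t)ⁿ)` for some integer polynomial `p`. -/
def memG0 (f : I01 → ℝ) : Prop :=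
  ∃ (p : Polynomial ℤ) (m n : ℕ),
    ∀ t : I01, f t = (Polynomial.aeval (t : ℝ) p) / ((t : ℝ) ^ m * (1 - (t : ℝ)) ^ n)

/-- The positive cone `G_F⁺ = {f ∈ G₀ : f > 0 on F} ∪ {0}`. -/
def memGFp (F : Set ℝ) (f : I01 → ℝ) : Prop :=
  memG0 f ∧ ((∀ t : I01, (t : ℝ) ∈ F → 0 < f t) ∨ f = 0)

/-- Membership in `G = ⊕_{n ∈ ℤ} G₀` (finitely supported sequences of elements of `G₀`). -/
def memG (x : ℤ → I01 → ℝ) : Prop :=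
  (∀ n : ℤ, memG0 (x n)) ∧ {n : ℤ | x n ≠ 0}.Finite

/-- `Σ_{n ∈ ℤ} αⁿ(xₙ)(t)`, where `α` is multiplication by `t/(1-t)`. -/
def sumAlpha (x : ℤ → I01 → ℝ) (t : I01) : ℝ :=
  ∑ᶠ n : ℤ, ((t : ℝ) / (1 - (t : ℝ))) ^ n * x n t

/-- `Σ_{n ∈ ℤ} xₙ(t)`. -/
def sumPlain (x : ℤ → I01 → ℝ) (t : I01) : ℝ := ∑ᶠ n : ℤ, x n t

/-- The automorphism `γ₊ : G → G`, `γ₊((xₙ)ₙ) = (α(x_{n+1}))ₙ`. -/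
def gammaStar (x : ℤ → I01 → ℝ) : ℤ → I01 → ℝ :=
  fun n t => ((t : ℝ) / (1 - (t : ℝ))) * x (n + 1) t

/-- The positive cone `G⁺` of `G` determined by `F` and `F₁`. -/
def memGplus (F F1 : Set ℝ) (x : ℤ → I01 → ℝ) : Prop :=
  memG x ∧
    (((∀ t : I01, (t : ℝ) ∈ F → 0 < sumAlpha x t) ∧
      (∀ t : I01, (t : ℝ) ∈ F1 → 0 < sumPlain x t)) ∨ x = 0)

/-- The cone `G⁺⁺ = {0} ∪ {x ∈ G : Σₙ αⁿ(xₙ) > 0 on F}`. -/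
def memGpp (F : Set ℝ) (x : ℤ → I01 → ℝ) : Prop :=
  memG x ∧ ((∀ t : I01, (t : ℝ) ∈ F → 0 < sumAlpha x t) ∨ x = 0)

/-- The sequence in `G` supported at `n = 0` with value `a`. -/
def delta0 (a : I01 → ℝ) : ℤ → I01 → ℝ := fun n => if n = 0 then a else 0


lemma ht_pos (t : I01) : (0:ℝ) < (t : ℝ) := t.2.1

lemma ht_lt_one (t : I01) : (t : ℝ) < 1 := t.2.2

lemma ht_ne (t : I01) : (t : ℝ) ≠ 0 := ne_of_gt (ht_pos t)

lemma h1t_ne (t : I01) : (1 : ℝ) - (t : ℝ) ≠ 0 := by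
  have := ht_lt_one t; linarith

lemma memG0_zero : memG0 (0 : I01 → ℝ) := by
  refine ⟨0, 0, 0, fun t => ?_⟩
  simp

lemma memG0_add {f g : I01 → ℝ} (hf : memG0 f) (hg : memG0 g) :
    memG0 (fun t => f t + g t) := by
  obtain ⟨p, m, n, hp⟩ := hf
  obtain ⟨q, m', n', hq⟩ := hg
  refine ⟨p * Polynomial.X ^ m' * (1 - Polynomial.X) ^ n'
      + q * Polynomial.X ^ m * (1 - Polynomial.X) ^ n, m + m', n + n', fun t => ?_⟩
  have h1 := ht_ne t
  have h2 := h1t_ne t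
  simp only [hp t, hq t, map_add, map_mul, map_pow, map_sub, map_one, Polynomial.aeval_X]
  field_simp
  ring

lemma memG0_zpow_mul {f : I01 → ℝ} (k : ℤ) (hf : memG0 f) :
    memG0 (fun t => ((t : ℝ) / (1 - (t : ℝ))) ^ k * f t) := by
  obtain ⟨p, m, n, hp⟩ := hf
  obtain ⟨j, hj | hj⟩ := k.eq_nat_or_neg
  · refine ⟨p * Polynomial.X ^ j, m, n + j, fun t => ?_⟩
    have h1 := ht_ne t
    have h2 := h1t_ne t
    simp only [hp t, hj, zpow_natCast, map_mul, map_pow, Polynomial.aeval_X, div_pow]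
    field_simp
    ring
  · refine ⟨p * (1 - Polynomial.X) ^ j, m + j, n, fun t => ?_⟩
    have h1 := ht_ne t
    have h2 := h1t_ne t
    simp only [hp t, hj, zpow_neg, zpow_natCast, map_mul, map_pow, map_sub, map_one,
      Polynomial.aeval_X, div_pow, inv_div]
    field_simp
    ring

lemma memG0_sum (s : Finset ℤ) (g : ℤ → I01 → ℝ) (hg : ∀ n ∈ s, memG0 (g n)) :
    memG0 (fun t => ∑ n ∈ s, g n t) := by
  classical
  induction s using Finset.induction_on with
  | empty => simp only [Finset.sum_empty]; exact memG0_zero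
  | insert _ _ hns ih =>
    rename_i a s'
    simp only [Finset.sum_insert hns]
    exact memG0_add (hg a (Finset.mem_insert_self a s'))
      (ih fun n hn => hg n (Finset.mem_insert_of_mem hn))

lemma sumAlpha_delta0 (f : I01 → ℝ) : sumAlpha (delta0 f) = f := by
  funext t
  have : (∑ᶠ n : ℤ, ((t : ℝ) / (1 - (t : ℝ))) ^ n * (delta0 f n) t)
      = ((t : ℝ) / (1 - (t : ℝ))) ^ (0:ℤ) * (delta0 f 0) t := by
    refine finsum_eq_single _ 0 fun n hn => ?_
    simp [delta0, hn]
  simp only [sumAlpha]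
  rw [this]
  simp [delta0]

/-- the isomorphism `S` (induced by `x ↦ Σₙ αⁿ(xₙ)`) maps the image of `G⁺⁺`
onto `G_F⁺ = {f ∈ G₀ : f > 0 on F} ∪ {0}`. -/
theorem stmt16 (F : Set ℝ) (hFne : F.Nonempty) (hFc : IsClosed F)
    (hFsub : F ⊆ Set.Icc 0 1) (hF0 : (0:ℝ) ∉ F) (hF1 : (1:ℝ) ∉ F) :
    (∀ x : ℤ → I01 → ℝ, memGpp F x → memGFp F (sumAlpha x)) ∧
    (∀ f : I01 → ℝ, memGFp F f → ∃ x : ℤ → I01 → ℝ, memGpp F x ∧ sumAlpha x = f) := by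
  classical
  constructor
  · rintro x ⟨⟨hmem, hfin⟩, hpos⟩
    have hrep : sumAlpha x = fun t : I01 => ∑ n ∈ hfin.toFinset,
        ((t : ℝ) / (1 - (t : ℝ))) ^ n * x n t := by
      funext t
      refine finsum_eq_finset_sum_of_support_subset _ fun n hn => ?_
      simp only [Function.mem_support] at hn
      rw [Set.Finite.coe_toFinset]
      simp only [Set.mem_setOf_eq]
      intro hx0
      apply hn
      rw [hx0]
      simp
    constructor
    · rw [hrep]
      exact memG0_sum _ _ fun n _ => memG0_zpow_mul n (hmem n)
    · rcases hpos with h | h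
      · exact Or.inl h
      · right
        subst h
        funext t
        simp [sumAlpha]
  · rintro f ⟨hf0, hpos⟩
    refine ⟨delta0 f, ⟨⟨fun n => ?_, ?_⟩, ?_⟩, sumAlpha_delta0 f⟩
    · by_cases hn : n = 0
      · simpa [delta0, hn] using hf0
      · simpa [delta0, hn] using memG0_zero
    · refine Set.Finite.subset (Set.finite_singleton 0) fun n hn => ?_
      simp only [Set.mem_setOf_eq, delta0] at hn
      rcases eq_or_ne n 0 with h | h
      · simp [h]
      · simp [h] at hn
    · rcases hpos with h | h
      · exact Or.inl (by rw [sumAlpha_delta0]; exact h)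
      · right
        subst h
        funext n t
        simp [delta0]

end
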